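/- arXiv:1411.6951 — 2 statements merged into one kernel-verified Lean document; each statement's English description precedes it below -/
import Mathlib

section
/- Let v > 0, 0 ≤ n ≤ 2k with v, q₁,…,q_k, p₁,…,p_n satisfying: Φ(x) = v + 2Σ_j G_{q_j}(x) - Σ_i G_{p_i}(x) where G_p is the periodic Green's function with singularity at p, the mutual distances |q_j - q_h|, |q_j - p_i| are at least 5, and the local masses λ_j (the finite part of Φ at q_j) satisfy λ_j > λ₀. Then for λ₀ sufficiently large (depending only on n, k, and a bound for the positions), there exist radii δ(λ_j) ∈ (1/λ_j, 2/λ_j] such that Φ ≥ 1 on the complement of {p₁,…,p_n} ∪ ⋃_j B_{δ(λ_j)}(q_j). -/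
/- STATEMENT 14: Localization of the region {Φ < 1} for the sum of periodic Dirac
monopoles Φ = v + 2Σ_j G_{q_j} - Σ_i G_{p_i}.  We model ℝ²×S¹ by 2π-periodic
functions on ℝ³; Φ is harmonic away from the lattice translates of the points
p_i, q_j, with the near-singularity expansions Φ = λ_j - 1/ρ_j + O(ρ_j) at q_j and
Φ = c_i + 1/(2ρ_i) + O(ρ_i) at p_i (O-constant C), mutual distances at least 5,
positions bounded by R, and Φ → +∞ at infinity (or Φ → v with v > 1 when n = 2k).
Conclusion: if all local masses λ_j exceed a λ₀ depending only on n, k, C, R, there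
are radii δ(λ_j) ∈ (1/λ_j, 2/λ_j] with Φ ≥ 1 away from the singularities p and the
balls B_{δ(λ_j)} around (the translates of) the q_j. -/

open Filter

noncomputable section

/-- The Euclidean Laplacian on `EuclideanSpace ℝ (Fin m)`. -/
noncomputable def lap {m : ℕ} (f : EuclideanSpace ℝ (Fin m) → ℝ)
    (x : EuclideanSpace ℝ (Fin m)) : ℝ :=
  ∑ i : Fin m, fderiv ℝ (fun y => fderiv ℝ f y (EuclideanSpace.single i 1)) x
    (EuclideanSpace.single i 1)

/-- Unit vector in the periodic (circle) direction. -/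
noncomputable def e3 : EuclideanSpace ℝ (Fin 3) := EuclideanSpace.single (2 : Fin 3) (1:ℝ)

open Set Metric
/-! ### Auxiliary lemmas -/

noncomputable abbrev P14 (i : Fin 3) : EuclideanSpace ℝ (Fin 3) →L[ℝ] ℝ := EuclideanSpace.proj i

lemma hproj14 (i : Fin 3) (y : EuclideanSpace ℝ (Fin 3)) :
    HasFDerivAt (fun w : EuclideanSpace ℝ (Fin 3) => w i) (P14 i) y := (P14 i).hasFDerivAt

lemma hcont_coord14 (i : Fin 3) : Continuous (fun y : EuclideanSpace ℝ (Fin 3) => y i) :=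
  (P14 i).continuous

lemma cs2_14 (a b c d : ℝ) : a*c + b*d ≤ Real.sqrt (a^2+b^2) * Real.sqrt (c^2+d^2) := by
  rcases le_or_gt (a*c + b*d) 0 with h | h
  · exact le_trans h (by positivity)
  · have h1 : (a*c+b*d)^2 ≤ (a^2+b^2)*(c^2+d^2) := by nlinarith [sq_nonneg (a*d - b*c)]
    calc a*c + b*d = Real.sqrt ((a*c+b*d)^2) := (Real.sqrt_sq h.le).symm
    _ ≤ Real.sqrt ((a^2+b^2)*(c^2+d^2)) := Real.sqrt_le_sqrt h1
    _ = Real.sqrt (a^2+b^2) * Real.sqrt (c^2+d^2) := Real.sqrt_mul (by positivity) _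

lemma tri2_14 (a b c d : ℝ) :
    Real.sqrt (a^2+b^2) ≤ Real.sqrt ((a-c)^2+(b-d)^2) + Real.sqrt (c^2+d^2) := by
  set R := Real.sqrt ((a-c)^2+(b-d)^2) + Real.sqrt (c^2+d^2) with hR
  have hR0 : 0 ≤ R := by positivity
  have e1 : Real.sqrt ((a-c)^2+(b-d)^2)^2 = (a-c)^2+(b-d)^2 := Real.sq_sqrt (by positivity)
  have e2 : Real.sqrt (c^2+d^2)^2 = c^2+d^2 := Real.sq_sqrt (by positivity)
  have h1 := cs2_14 (a-c) (b-d) c d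
  have h2 : a^2+b^2 ≤ R^2 := by rw [hR]; nlinarith [h1, e1, e2]
  calc Real.sqrt (a^2+b^2) ≤ Real.sqrt (R^2) := Real.sqrt_le_sqrt h2
  _ = R := Real.sqrt_sq hR0

lemma sqrt_two_coord_le_norm14 (y : EuclideanSpace ℝ (Fin 3)) :
    Real.sqrt ((y 0)^2 + (y 1)^2) ≤ ‖y‖ := by
  rw [EuclideanSpace.norm_eq]
  apply Real.sqrt_le_sqrt
  rw [Fin.sum_univ_three]
  simp only [Real.norm_eq_abs, sq_abs]
  nlinarith [sq_nonneg (y 2)]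

lemma rad_lip14 (y z : EuclideanSpace ℝ (Fin 3)) :
    Real.sqrt ((y 0)^2 + (y 1)^2) ≤ Real.sqrt ((z 0)^2 + (z 1)^2) + dist y z := by
  have h1 := tri2_14 (y 0) (y 1) (z 0) (z 1)
  have h2 : Real.sqrt ((y 0 - z 0)^2+(y 1 - z 1)^2) ≤ dist y z := by
    rw [dist_eq_norm]
    have h3 : Real.sqrt ((y 0 - z 0)^2+(y 1 - z 1)^2)
        ≤ Real.sqrt (((y-z) 0)^2 + ((y-z) 1)^2) := by
      simp only [PiLp.sub_apply]
      exact le_refl _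
    exact h3.trans (sqrt_two_coord_le_norm14 (y - z))
  linarith

lemma abs_coord_le_norm14 (y : EuclideanSpace ℝ (Fin 3)) (i : Fin 3) : |y i| ≤ ‖y‖ := by
  rw [EuclideanSpace.norm_eq]
  rw [show |y i| = Real.sqrt ((y i)^2) from (Real.sqrt_sq_eq_abs _).symm]
  apply Real.sqrt_le_sqrt
  rw [Fin.sum_univ_three]
  simp only [Real.norm_eq_abs, sq_abs]
  fin_cases i <;> simp <;> nlinarith [sq_nonneg (y 0), sq_nonneg (y 1), sq_nonneg (y 2)]

lemma sqrt_add_le14 (a b : ℝ) (ha : 0 ≤ a) (hb : 0 ≤ b) :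
    Real.sqrt (a + b) ≤ Real.sqrt a + Real.sqrt b := by
  have h : a + b ≤ (Real.sqrt a + Real.sqrt b)^2 := by
    have e1 : Real.sqrt a ^2 = a := Real.sq_sqrt ha
    have e2 : Real.sqrt b ^2 = b := Real.sq_sqrt hb
    nlinarith [Real.sqrt_nonneg a, Real.sqrt_nonneg b]
  calc Real.sqrt (a+b) ≤ Real.sqrt ((Real.sqrt a + Real.sqrt b)^2) := Real.sqrt_le_sqrt h
  _ = _ := Real.sqrt_sq (by positivity)

lemma norm_le_rad_add14 (y : EuclideanSpace ℝ (Fin 3)) :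
    ‖y‖ ≤ Real.sqrt ((y 0)^2+(y 1)^2) + |y 2| := by
  rw [EuclideanSpace.norm_eq, Fin.sum_univ_three]
  simp only [Real.norm_eq_abs, sq_abs]
  calc Real.sqrt ((y 0)^2 + (y 1)^2 + (y 2)^2)
      ≤ Real.sqrt ((y 0)^2 + (y 1)^2) + Real.sqrt ((y 2)^2) :=
        sqrt_add_le14 _ _ (by positivity) (by positivity)
  _ = _ := by rw [Real.sqrt_sq_eq_abs]

lemma e3_apply14 (i : Fin 3) : e3 i = if i = 2 then 1 else 0 := by
  rw [e3, EuclideanSpace.single_apply]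

lemma per_int14 {Φ : EuclideanSpace ℝ (Fin 3) → ℝ}
    (h : ∀ x, Φ (x + (2*Real.pi) • e3) = Φ x) (m : ℤ) :
    ∀ x, Φ (x + ((2*Real.pi*m : ℝ)) • e3) = Φ x := by
  induction m using Int.induction_on with
  | zero => intro x; norm_num
  | succ i ih =>
    intro x
    have hs : ((2*Real.pi*((i:ℤ)+1:ℤ) : ℝ)) • e3
        = ((2*Real.pi*(i:ℤ) : ℝ)) • e3 + (2*Real.pi) • e3 := by
      rw [← add_smul]; congr 1; push_cast; ring
    push_cast at hs ih ⊢
    rw [hs, ← add_assoc, h]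
    exact ih x
  | pred i ih =>
    intro x
    have key := h (x + ((2*Real.pi*((-i:ℤ)-1) : ℝ)) • e3)
    have hs : x + ((2*Real.pi*((-i:ℤ)-1) : ℝ)) • e3 + (2*Real.pi) • e3
        = x + ((2*Real.pi*((-i:ℤ)) : ℝ)) • e3 := by
      rw [add_assoc, ← add_smul]; congr 2; push_cast; ring
    push_cast at key hs ih ⊢
    rw [hs] at key
    rw [← key]
    exact ih x

lemma dist_sub_shift14 (y c : EuclideanSpace ℝ (Fin 3)) (r : ℝ) :
    dist (y - r • e3) c = dist y (c + r • e3) := by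
  rw [dist_eq_norm, dist_eq_norm]; congr 1; abel

lemma shift_combine14 (c : EuclideanSpace ℝ (Fin 3)) (m mm : ℤ) :
    (c + ((2*Real.pi*m : ℝ)) • e3) + ((2*Real.pi*mm : ℝ)) • e3
      = c + ((2*Real.pi*((m+mm : ℤ)) : ℝ)) • e3 := by
  rw [add_assoc, ← add_smul]; congr 2; push_cast; ring

lemma val_sub_shift14 {Φ : EuclideanSpace ℝ (Fin 3) → ℝ}
    (h : ∀ x, Φ (x + (2*Real.pi) • e3) = Φ x) (m : ℤ) (y : EuclideanSpace ℝ (Fin 3)) :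
    Φ (y - ((2*Real.pi*m : ℝ)) • e3) = Φ y := by
  have h1 := per_int14 h m (y - ((2*Real.pi*m : ℝ)) • e3)
  rw [sub_add_cancel] at h1
  rw [h1]

/-- Second derivative test: at a local minimum of a C² function all diagonal second
directional derivatives are nonnegative. -/
lemma sd_test14 {f : EuclideanSpace ℝ (Fin 3) → ℝ} {x : EuclideanSpace ℝ (Fin 3)}
    (hf : ContDiffAt ℝ 2 f x) (hmin : IsLocalMin f x) (v : EuclideanSpace ℝ (Fin 3)) :
    0 ≤ fderiv ℝ (fun y => fderiv ℝ f y v) x v := by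
  by_contra hneg
  push_neg at hneg
  obtain ⟨U0, hU0, hfU0⟩ := hf.contDiffOn (le_refl 2) (by simp)
  have hUopen : IsOpen (interior U0) := isOpen_interior
  have hxU : x ∈ interior U0 := mem_interior_iff_mem_nhds.2 hU0
  have hC2 : ∀ y ∈ interior U0, ContDiffAt ℝ 2 f y := fun y hy =>
    (hfU0.mono interior_subset).contDiffAt (hUopen.mem_nhds hy)
  set h : ℝ → EuclideanSpace ℝ (Fin 3) := fun t => x + t • v with hhdef
  have hh : ∀ t : ℝ, HasDerivAt h v t := fun t => by
    have := ((hasDerivAt_id t).smul_const v).const_add x; rw [one_smul] at this; exact this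
  have hhc : Continuous h := by
    exact continuous_const.add (continuous_id.smul continuous_const)
  have hh0 : h 0 = x := by simp [hhdef]
  set g : ℝ → ℝ := fun t => f (h t) with hgdef
  have hI : IsOpen (h ⁻¹' interior U0) := hUopen.preimage hhc
  have h0I : (0:ℝ) ∈ h ⁻¹' interior U0 := by simp [Set.mem_preimage, hh0, hxU]
  have hg' : ∀ t ∈ h ⁻¹' interior U0, HasDerivAt g (fderiv ℝ f (h t) v) t := fun t ht =>
    ((((hC2 _ ht).differentiableAt (by norm_num)).hasFDerivAt).comp_hasDerivAt t (hh t))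
  set φ : EuclideanSpace ℝ (Fin 3) → ℝ := fun y => fderiv ℝ f y v with hφdef
  have hφd : DifferentiableAt ℝ φ x := by
    have h1 : ContDiffAt ℝ 1 (fderiv ℝ f) x := hf.fderiv_right (by norm_num)
    exact ((ContinuousLinearMap.apply ℝ ℝ v).differentiableAt).comp x
      (h1.differentiableAt (by norm_num))
  have hL : HasDerivAt (deriv g) (fderiv ℝ φ x v) 0 := by
    have hfd : HasFDerivAt φ (fderiv ℝ φ x) (h 0) := by rw [hh0]; exact hφd.hasFDerivAt
    have hcomp : HasDerivAt (φ ∘ h) (fderiv ℝ φ x v) 0 := hfd.comp_hasDerivAt 0 (hh 0)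
    have hev : deriv g =ᶠ[nhds 0] φ ∘ h := by
      filter_upwards [hI.mem_nhds h0I] with t ht
      exact (hg' t ht).deriv
    exact hcomp.congr_of_eventuallyEq hev
  have hming : IsLocalMin g 0 := by
    have hmin' : IsMinFilter f (nhds x) (h 0) := hh0 ▸ hmin
    have ht : Tendsto h (nhds 0) (nhds x) := by
      have := hhc.tendsto 0; rwa [hh0] at this
    exact hmin'.comp_tendsto ht
  have hg0 : deriv g 0 = 0 := hming.deriv_eq_zero
  set L := fderiv ℝ φ x v with hLdef
  have hLneg : L < 0 := hneg
  have hslope : Tendsto (slope (deriv g) 0) (nhdsWithin 0 {(0:ℝ)}ᶜ) (nhds L) :=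
    hasDerivAt_iff_tendsto_slope.1 hL
  have hsub : Set.Ioi (0:ℝ) ⊆ {(0:ℝ)}ᶜ := fun t ht => ne_of_gt ht
  have hev2 : ∀ᶠ t in nhdsWithin (0:ℝ) (Set.Ioi 0), slope (deriv g) 0 t < L/2 :=
    (hslope.mono_left (nhdsWithin_mono 0 hsub)).eventually_lt_const (by linarith)
  obtain ⟨u, hu, huS⟩ := mem_nhdsGT_iff_exists_Ioo_subset.1 hev2
  have hu2 : (0:ℝ) < u := hu
  have hW : ({t : ℝ | g 0 ≤ g t} ∩ h ⁻¹' interior U0) ∈ nhds (0:ℝ) :=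
    Filter.inter_mem hming (hI.mem_nhds h0I)
  obtain ⟨ε, hε, hball⟩ := Metric.mem_nhds_iff.1 hW
  set t1 := min (u/2) (ε/2) with ht1def
  have ht1pos : 0 < t1 := lt_min (by linarith) (by linarith)
  have hIccW : Set.Icc (0:ℝ) t1 ⊆ {t : ℝ | g 0 ≤ g t} ∩ h ⁻¹' interior U0 := by
    intro t ht
    apply hball
    simp only [Metric.mem_ball, Real.dist_eq, sub_zero]
    rw [abs_of_nonneg ht.1]
    calc t ≤ t1 := ht.2
    _ ≤ ε/2 := min_le_right _ _
    _ < ε := by linarith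
  have hderivneg : ∀ t ∈ interior (Set.Icc (0:ℝ) t1), deriv g t < 0 := by
    rw [interior_Icc]
    intro t ht
    have htu : t ∈ Set.Ioo 0 u :=
      ⟨ht.1, lt_of_lt_of_le ht.2 (le_trans (min_le_left _ _) (by linarith))⟩
    have hsl := huS htu
    simp only [Set.mem_setOf_eq] at hsl
    rw [slope_def_field, hg0, sub_zero, sub_zero, div_lt_iff₀ ht.1] at hsl
    nlinarith [ht.1, hLneg]
  have hcont : ContinuousOn g (Set.Icc 0 t1) := by
    intro t ht
    exact ((hg' t (hIccW ht).2).differentiableAt.continuousAt).continuousWithinAt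
  have hanti : StrictAntiOn g (Set.Icc 0 t1) :=
    strictAntiOn_of_deriv_neg (convex_Icc 0 t1) hcont hderivneg
  have h01 : g t1 < g 0 :=
    hanti (Set.left_mem_Icc.2 (le_of_lt ht1pos)) (Set.right_mem_Icc.2 (le_of_lt ht1pos)) ht1pos
  have h02 : g 0 ≤ g t1 := (hIccW (Set.right_mem_Icc.2 (le_of_lt ht1pos))).1
  linarith

lemma hgderiv14 (y : EuclideanSpace ℝ (Fin 3)) :
    HasFDerivAt (fun w : EuclideanSpace ℝ (Fin 3) => w 0 * w 0 + w 1 * w 1)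
      ((y 0 • P14 0 + y 0 • P14 0) + (y 1 • P14 1 + y 1 • P14 1)) y :=
  ((hproj14 0 y).mul (hproj14 0 y)).add ((hproj14 1 y).mul (hproj14 1 y))

/-- There is no local minimum of `Φ - ε·(y₀²+y₁²)` at a point where `Φ` is C² and harmonic. -/
lemma lap_pert14 {Φ : EuclideanSpace ℝ (Fin 3) → ℝ} {z : EuclideanSpace ℝ (Fin 3)} {ε : ℝ}
    (hε : 0 < ε) (hΦ : ContDiffAt ℝ 2 Φ z) (hlap : lap Φ z = 0)
    (hmin : IsLocalMin (fun y => Φ y - ε * ((y 0)^2 + (y 1)^2)) z) : False := by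
  have hfun : (fun y : EuclideanSpace ℝ (Fin 3) => Φ y - ε * ((y 0)^2 + (y 1)^2))
      = fun y => Φ y - ε * (y 0 * y 0 + y 1 * y 1) := by
    funext y; ring
  rw [hfun] at hmin
  set u : EuclideanSpace ℝ (Fin 3) → ℝ := fun y => Φ y - ε * (y 0 * y 0 + y 1 * y 1) with hudef
  have hgC : ContDiff ℝ 2 (fun w : EuclideanSpace ℝ (Fin 3) => w 0 * w 0 + w 1 * w 1) :=
    (((P14 0).contDiff.mul (P14 0).contDiff).add ((P14 1).contDiff.mul (P14 1).contDiff))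
  have huC : ContDiffAt ℝ 2 u z := hΦ.sub ((contDiff_const.mul hgC).contDiffAt)
  have key : ∀ i : Fin 3,
      fderiv ℝ (fun y => fderiv ℝ u y (EuclideanSpace.single i 1)) z (EuclideanSpace.single i 1)
      = fderiv ℝ (fun y => fderiv ℝ Φ y (EuclideanSpace.single i 1)) z (EuclideanSpace.single i 1)
        - ε * (2 * (EuclideanSpace.single i (1:ℝ) 0)^2
            + 2 * (EuclideanSpace.single i (1:ℝ) 1)^2) := by
    intro i
    set v := EuclideanSpace.single i (1:ℝ) with hvdef
    set a := v 0 with hadef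
    set b := v 1 with hbdef
    set χ : EuclideanSpace ℝ (Fin 3) → ℝ :=
      fun y => ε * (y 0 * a + y 0 * a + (y 1 * b + y 1 * b)) with hχdef
    set Dv : EuclideanSpace ℝ (Fin 3) →L[ℝ] ℝ :=
      (a • P14 0 + a • P14 0) + (b • P14 1 + b • P14 1) with hDvdef
    have hχd : ∀ y, HasFDerivAt χ (ε • Dv) y := fun y => by
      have h1 : HasFDerivAt (fun w : EuclideanSpace ℝ (Fin 3) =>
          w 0 * a + w 0 * a + (w 1 * b + w 1 * b)) Dv y :=
        (((hproj14 0 y).mul_const a).add ((hproj14 0 y).mul_const a)).add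
          (((hproj14 1 y).mul_const b).add ((hproj14 1 y).mul_const b))
      exact h1.const_mul ε
    have hEv : ∀ᶠ y in nhds z, DifferentiableAt ℝ Φ y :=
      (hΦ.eventually (by simp)).mono (fun y hy => hy.differentiableAt (by norm_num))
    have hfu : (fun y => fderiv ℝ u y v) =ᶠ[nhds z]
        (fun y => fderiv ℝ Φ y v - χ y) := by
      filter_upwards [hEv] with y hy
      have hgd : DifferentiableAt ℝ
          (fun w : EuclideanSpace ℝ (Fin 3) => w 0 * w 0 + w 1 * w 1) y :=
        (hgderiv14 y).differentiableAt
      have h1 : fderiv ℝ u y = fderiv ℝ Φ y - fderiv ℝ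
          (fun w : EuclideanSpace ℝ (Fin 3) => ε * (w 0 * w 0 + w 1 * w 1)) y :=
        fderiv_sub hy (hgd.const_mul ε)
      have h2 : fderiv ℝ (fun w : EuclideanSpace ℝ (Fin 3) => ε * (w 0 * w 0 + w 1 * w 1)) y
          = ε • ((y 0 • P14 0 + y 0 • P14 0) + (y 1 • P14 1 + y 1 • P14 1)) := by
        rw [fderiv_const_mul hgd ε, (hgderiv14 y).fderiv]
      rw [h1, h2]
      simp [χ, ContinuousLinearMap.sub_apply, ContinuousLinearMap.add_apply,
        ContinuousLinearMap.smul_apply, smul_eq_mul]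
      ring
    have hdiff1 : DifferentiableAt ℝ (fun y => fderiv ℝ Φ y v) z := by
      have h1 : ContDiffAt ℝ 1 (fderiv ℝ Φ) z := hΦ.fderiv_right (by norm_num)
      exact ((ContinuousLinearMap.apply ℝ ℝ v).differentiableAt).comp z
        (h1.differentiableAt (by norm_num))
    have hstep : fderiv ℝ (fun y => fderiv ℝ u y v) z
        = fderiv ℝ (fun y => fderiv ℝ Φ y v) z - ε • Dv := by
      rw [hfu.fderiv_eq]
      rw [fderiv_fun_sub hdiff1 (hχd z).differentiableAt, (hχd z).fderiv]
    rw [hstep]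
    simp only [ContinuousLinearMap.sub_apply, ContinuousLinearMap.smul_apply,
      ContinuousLinearMap.add_apply, smul_eq_mul, Dv]
    have hP0 : (P14 0) v = a := rfl
    have hP1 : (P14 1) v = b := rfl
    rw [hP0, hP1]
    ring
  have hsum : ∑ i : Fin 3, fderiv ℝ (fun y => fderiv ℝ u y (EuclideanSpace.single i 1)) z
      (EuclideanSpace.single i 1) = lap Φ z - 4 * ε := by
    rw [Fin.sum_univ_three, key 0, key 1, key 2]
    simp only [lap, Fin.sum_univ_three, EuclideanSpace.single_apply]
    norm_num [show ((0:Fin 3) = 2) ↔ False from by decide,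
      show ((1:Fin 3) = 2) ↔ False from by decide]
    ring
  have hpos : ∀ i : Fin 3, 0 ≤ fderiv ℝ (fun y => fderiv ℝ u y (EuclideanSpace.single i 1)) z
      (EuclideanSpace.single i 1) := fun i => sd_test14 huC hmin _
  have hge : (0:ℝ) ≤ lap Φ z - 4 * ε := by
    rw [← hsum]
    exact Finset.sum_nonneg (fun i _ => hpos i)
  rw [hlap] at hge
  linarith

set_option maxHeartbeats 4000000 in
theorem stmt_14 (n k : ℕ) (C R : ℝ) (hC : 0 < C) (hR : 0 < R) :
    ∃ lam0 : ℝ, 1 < lam0 ∧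
      ∀ (v : ℝ) (p : Fin n → EuclideanSpace ℝ (Fin 3))
        (q : Fin k → EuclideanSpace ℝ (Fin 3))
        (lam : Fin k → ℝ) (c : Fin n → ℝ) (Φ : EuclideanSpace ℝ (Fin 3) → ℝ),
        (∀ x, Φ (x + (2 * Real.pi) • e3) = Φ x) →
        (∀ i, ‖p i‖ ≤ R) → (∀ j, ‖q j‖ ≤ R) →
        (∀ j h, j ≠ h → 5 ≤ dist (q j) (q h)) →
        (∀ j i, 5 ≤ dist (q j) (p i)) →
        (∀ x : EuclideanSpace ℝ (Fin 3),
          (¬ ∃ i, ∃ m : ℤ, x = p i + ((2 * Real.pi * m : ℝ)) • e3) →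
          (¬ ∃ j, ∃ m : ℤ, x = q j + ((2 * Real.pi * m : ℝ)) • e3) →
          ContDiffAt ℝ 2 Φ x ∧ lap Φ x = 0) →
        (∀ j x, 0 < dist x (q j) → dist x (q j) < 1 →
          |Φ x - lam j + (dist x (q j))⁻¹| ≤ C * dist x (q j)) →
        (∀ i x, 0 < dist x (p i) → dist x (p i) < 1 →
          |Φ x - c i - (2 * dist x (p i))⁻¹| ≤ C * dist x (p i)) →
        (Tendsto Φ (Filter.comap
            (fun x : EuclideanSpace ℝ (Fin 3) => Real.sqrt ((x 0) ^ 2 + (x 1) ^ 2))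
            atTop) atTop ∨
          (n = 2 * k ∧ 1 < v ∧
            Tendsto Φ (Filter.comap
              (fun x : EuclideanSpace ℝ (Fin 3) => Real.sqrt ((x 0) ^ 2 + (x 1) ^ 2))
              atTop) (nhds v))) →
        (∀ j, lam0 < lam j) →
        ∃ δ : Fin k → ℝ,
          (∀ j, (lam j)⁻¹ < δ j ∧ δ j ≤ 2 / lam j) ∧
          ∀ x : EuclideanSpace ℝ (Fin 3),
            (¬ ∃ i, ∃ m : ℤ, x = p i + ((2 * Real.pi * m : ℝ)) • e3) →
            (∀ j, ∀ m : ℤ, δ j ≤ dist x (q j + ((2 * Real.pi * m : ℝ)) • e3)) →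
            1 ≤ Φ x := by
  refine ⟨9 + 9*C, by linarith, ?_⟩
  intro v p q lam c Φ hper hpR hqR hqq hqp hharm hqexp hpexp hinf hlam
  have hπ := Real.pi_pos
  have hπ3 := Real.pi_gt_three
  have hlampos : ∀ j, 0 < lam j := fun j => by have := hlam j; linarith
  refine ⟨fun j => 2 / lam j, fun j => ⟨?_, le_rfl⟩, ?_⟩
  · have h := hlampos j
    rw [inv_eq_one_div, div_lt_div_iff₀ h h]
    nlinarith
  intro x hx1 hx2
  simp only [] at hx2
  -- translated expansions
  have hqexp' : ∀ (j : Fin k) (m : ℤ) (y : EuclideanSpace ℝ (Fin 3)),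
      0 < dist y (q j + ((2 * Real.pi * m : ℝ)) • e3) →
      dist y (q j + ((2 * Real.pi * m : ℝ)) • e3) < 1 →
      |Φ y - lam j + (dist y (q j + ((2 * Real.pi * m : ℝ)) • e3))⁻¹|
        ≤ C * dist y (q j + ((2 * Real.pi * m : ℝ)) • e3) := by
    intro j m y h1 h2
    have hd : dist (y - ((2*Real.pi*m : ℝ)) • e3) (q j)
        = dist y (q j + ((2*Real.pi*m : ℝ)) • e3) := dist_sub_shift14 y (q j) _
    have hv : Φ (y - ((2*Real.pi*m : ℝ)) • e3) = Φ y := val_sub_shift14 hper m y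
    have h3 := hqexp j (y - ((2*Real.pi*m : ℝ)) • e3) (by rw [hd]; exact h1) (by rw [hd]; exact h2)
    rwa [hd, hv] at h3
  have hpexp' : ∀ (i : Fin n) (m : ℤ) (y : EuclideanSpace ℝ (Fin 3)),
      0 < dist y (p i + ((2 * Real.pi * m : ℝ)) • e3) →
      dist y (p i + ((2 * Real.pi * m : ℝ)) • e3) < 1 →
      |Φ y - c i - (2 * dist y (p i + ((2 * Real.pi * m : ℝ)) • e3))⁻¹|
        ≤ C * dist y (p i + ((2 * Real.pi * m : ℝ)) • e3) := by
    intro i m y h1 h2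
    have hd : dist (y - ((2*Real.pi*m : ℝ)) • e3) (p i)
        = dist y (p i + ((2*Real.pi*m : ℝ)) • e3) := dist_sub_shift14 y (p i) _
    have hv : Φ (y - ((2*Real.pi*m : ℝ)) • e3) = Φ y := val_sub_shift14 hper m y
    have h3 := hpexp i (y - ((2*Real.pi*m : ℝ)) • e3) (by rw [hd]; exact h1) (by rw [hd]; exact h2)
    rwa [hd, hv] at h3
  -- far field bound
  have hfar : ∃ A r1', 1 < A ∧ A ≤ 2 ∧
      ∀ y : EuclideanSpace ℝ (Fin 3), r1' ≤ Real.sqrt ((y 0)^2 + (y 1)^2) → A ≤ Φ y := by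
    rcases hinf with h | ⟨_, hv, h⟩
    · have he := h.eventually (Filter.eventually_ge_atTop (2:ℝ))
      rw [Filter.eventually_comap, Filter.eventually_atTop] at he
      obtain ⟨r1', hr⟩ := he
      exact ⟨2, r1', one_lt_two, le_rfl, fun y hy => hr _ hy y rfl⟩
    · have he := h.eventually (eventually_gt_nhds (show (1+v)/2 < v by linarith))
      rw [Filter.eventually_comap, Filter.eventually_atTop] at he
      obtain ⟨r1', hr⟩ := he
      exact ⟨min ((1+v)/2) 2, r1', lt_min (by linarith) one_lt_two, min_le_right _ _,
        fun y hy => le_of_lt (lt_of_le_of_lt (min_le_left _ _) (hr _ hy y rfl))⟩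
  obtain ⟨A, r1', hA1, hA2, hfarb⟩ := hfar
  set r1 : ℝ := |r1'| + 1 with hr1def
  have hr1ge : 1 ≤ r1 := by have := abs_nonneg r1'; rw [hr1def]; linarith
  have hfar2 : ∀ y : EuclideanSpace ℝ (Fin 3),
      r1 ≤ Real.sqrt ((y 0)^2 + (y 1)^2) → A ≤ Φ y := by
    intro y hy
    exact hfarb y (le_trans (by rw [hr1def] at hy ⊢; have := le_abs_self r1'; linarith) hy)
  -- constants
  set B : ℝ := ∑ i, |c i| with hBdef
  have hB0 : 0 ≤ B := Finset.sum_nonneg fun _ _ => abs_nonneg _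
  have hBi : ∀ i, |c i| ≤ B := fun i =>
    Finset.single_le_sum (f := fun i => |c i|) (fun _ _ => abs_nonneg _) (Finset.mem_univ i)
  set D : ℝ := C + B + 3 with hDdef
  have hD3 : 3 ≤ D := by rw [hDdef]; linarith
  have hDpos : 0 < D := by linarith
  have hDC : C ≤ D := by rw [hDdef]; linarith
  set τ : ℝ := 1 / (4*D) with hτdef
  have hτpos : 0 < τ := by rw [hτdef]; positivity
  have hτsmall : τ ≤ 1/12 := by
    rw [hτdef, div_le_div_iff₀ (by linarith) (by norm_num)]
    linarith
  -- p-ball bound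
  have hpball : ∀ (i : Fin n) (m : ℤ) (y : EuclideanSpace ℝ (Fin 3)),
      0 < dist y (p i + ((2 * Real.pi * m : ℝ)) • e3) →
      dist y (p i + ((2 * Real.pi * m : ℝ)) • e3) < 2*τ → 2 ≤ Φ y := by
    intro i m y h1 h2
    set ρ := dist y (p i + ((2 * Real.pi * m : ℝ)) • e3) with hρdef
    have hρ1 : ρ < 1 := by linarith [hτsmall]
    have habs := hpexp' i m y h1 hρ1
    have hlow : c i + (2*ρ)⁻¹ - C*ρ ≤ Φ y := by
      have h3 := (abs_le.1 habs).1
      linarith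
    have h2ρ : (0:ℝ) < 2*ρ := by linarith
    have hlt : 2*ρ ≤ 1/D := by
      have h4 : 2*(2*τ) = 1/D := by rw [hτdef]; field_simp; norm_num
      linarith
    have hinv : D ≤ (2*ρ)⁻¹ := by
      have h5 := one_div_le_one_div_of_le h2ρ hlt
      rw [one_div_one_div] at h5
      rw [inv_eq_one_div]
      exact h5
    have hCρ : C*ρ ≤ 1 := by
      have hρD : ρ ≤ 1/D := by linarith
      have h1' : C*ρ ≤ C*(1/D) := by nlinarith
      have h9 : C*(1/D) ≤ 1 := by rw [mul_one_div, div_le_one hDpos]; exact hDC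
      linarith
    have hci : -B ≤ c i := by have h6 := neg_abs_le (c i); have h7 := hBi i; linarith
    rw [hDdef] at hinv
    linarith
  -- q annulus bound
  have hqann : ∀ (j : Fin k) (m : ℤ) (y : EuclideanSpace ℝ (Fin 3)),
      2/lam j ≤ dist y (q j + ((2 * Real.pi * m : ℝ)) • e3) →
      dist y (q j + ((2 * Real.pi * m : ℝ)) • e3) < 1 → 2 ≤ Φ y := by
    intro j m y h1 h2
    set ρ := dist y (q j + ((2 * Real.pi * m : ℝ)) • e3) with hρdef
    have hδpos : 0 < 2/lam j := div_pos two_pos (hlampos j)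
    have hρpos : 0 < ρ := lt_of_lt_of_le hδpos h1
    have habs := hqexp' j m y hρpos h2
    have hlow : lam j - ρ⁻¹ - C*ρ ≤ Φ y := by
      have h3 := (abs_le.1 habs).1
      linarith
    have hinvρ : ρ⁻¹ ≤ lam j / 2 := by
      have h4 := one_div_le_one_div_of_le hδpos h1
      rw [one_div_div] at h4
      rw [inv_eq_one_div]
      exact h4
    have hCρ : C*ρ ≤ C := by nlinarith
    have h5 := hlam j
    linarith
  -- nonsingular points
  have hnsing : ∀ y : EuclideanSpace ℝ (Fin 3),
      (∀ (j : Fin k) (m : ℤ), 2/lam j ≤ dist y (q j + ((2 * Real.pi * m : ℝ)) • e3)) →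
      (∀ (i : Fin n) (m : ℤ), τ ≤ dist y (p i + ((2 * Real.pi * m : ℝ)) • e3)) →
      ContDiffAt ℝ 2 Φ y ∧ lap Φ y = 0 := by
    intro y h1 h2
    apply hharm
    · rintro ⟨i, m, rfl⟩
      have h3 := h2 i m
      simp only [dist_self] at h3
      linarith
    · rintro ⟨j, m, rfl⟩
      have h3 := h1 j m
      simp only [dist_self] at h3
      have h4 : 0 < 2/lam j := div_pos two_pos (hlampos j)
      linarith
  -- easy cases for x
  by_cases hcase1 : ∃ (i : Fin n) (m : ℤ), dist x (p i + ((2 * Real.pi * m : ℝ)) • e3) < 2*τ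
  · obtain ⟨i, m, hd⟩ := hcase1
    have hpos : 0 < dist x (p i + ((2 * Real.pi * m : ℝ)) • e3) :=
      dist_pos.2 (fun h => hx1 ⟨i, m, h⟩)
    linarith [hpball i m x hpos hd]
  by_cases hcase2 : ∃ (j : Fin k) (m : ℤ), dist x (q j + ((2 * Real.pi * m : ℝ)) • e3) < 1
  · obtain ⟨j, m, hd⟩ := hcase2
    linarith [hqann j m x (hx2 j m) hd]
  by_cases hcase3 : r1 ≤ Real.sqrt ((x 0)^2 + (x 1)^2)
  · linarith [hfar2 x hcase3]
  push_neg at hcase1 hcase2 hcase3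
  -- the compact region T
  set T : Set (EuclideanSpace ℝ (Fin 3)) := {y |
    (∀ (j : Fin k) (m : ℤ), 2/lam j ≤ dist y (q j + ((2 * Real.pi * m : ℝ)) • e3)) ∧
    (∀ (i : Fin n) (m : ℤ), τ ≤ dist y (p i + ((2 * Real.pi * m : ℝ)) • e3)) ∧
    Real.sqrt ((y 0)^2 + (y 1)^2) ≤ r1 + 1 ∧ |y 2 - x 2| ≤ 4*Real.pi} with hTdef
  have hmemT : ∀ y, y ∈ T ↔
      (∀ (j : Fin k) (m : ℤ), 2/lam j ≤ dist y (q j + ((2 * Real.pi * m : ℝ)) • e3)) ∧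
      (∀ (i : Fin n) (m : ℤ), τ ≤ dist y (p i + ((2 * Real.pi * m : ℝ)) • e3)) ∧
      Real.sqrt ((y 0)^2 + (y 1)^2) ≤ r1 + 1 ∧ |y 2 - x 2| ≤ 4*Real.pi := by
    intro y; rw [hTdef]; rfl
  have hxT : x ∈ T := by
    rw [hmemT]
    refine ⟨hx2, fun i m => le_trans (by linarith) (hcase1 i m),
      le_trans (le_of_lt hcase3) (by linarith), ?_⟩
    simp only [sub_self, abs_zero]
    positivity
  have hclosed : IsClosed T := by
    have h1 : IsClosed {y : EuclideanSpace ℝ (Fin 3) |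
        ∀ (j : Fin k) (m : ℤ), 2/lam j ≤ dist y (q j + ((2*Real.pi*m : ℝ)) • e3)} := by
      have he : {y : EuclideanSpace ℝ (Fin 3) |
          ∀ (j : Fin k) (m : ℤ), 2/lam j ≤ dist y (q j + ((2*Real.pi*m : ℝ)) • e3)}
          = ⋂ (j : Fin k), ⋂ (m : ℤ),
            {y | 2/lam j ≤ dist y (q j + ((2*Real.pi*m : ℝ)) • e3)} := by
        ext y; simp [Set.mem_iInter]
      rw [he]
      exact isClosed_iInter fun j => isClosed_iInter fun m =>
        isClosed_le continuous_const (continuous_id.dist continuous_const)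
    have h2 : IsClosed {y : EuclideanSpace ℝ (Fin 3) |
        ∀ (i : Fin n) (m : ℤ), τ ≤ dist y (p i + ((2*Real.pi*m : ℝ)) • e3)} := by
      have he : {y : EuclideanSpace ℝ (Fin 3) |
          ∀ (i : Fin n) (m : ℤ), τ ≤ dist y (p i + ((2*Real.pi*m : ℝ)) • e3)}
          = ⋂ (i : Fin n), ⋂ (m : ℤ),
            {y | τ ≤ dist y (p i + ((2*Real.pi*m : ℝ)) • e3)} := by
        ext y; simp [Set.mem_iInter]
      rw [he]
      exact isClosed_iInter fun i => isClosed_iInter fun m =>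
        isClosed_le continuous_const (continuous_id.dist continuous_const)
    have h3 : IsClosed {y : EuclideanSpace ℝ (Fin 3) |
        Real.sqrt ((y 0)^2 + (y 1)^2) ≤ r1 + 1} :=
      isClosed_le (Real.continuous_sqrt.comp
        (((hcont_coord14 0).pow 2).add ((hcont_coord14 1).pow 2))) continuous_const
    have h4 : IsClosed {y : EuclideanSpace ℝ (Fin 3) | |y 2 - x 2| ≤ 4*Real.pi} :=
      isClosed_le (((hcont_coord14 2).sub continuous_const).abs) continuous_const
    have he : T = _ := hTdef
    rw [hTdef, Set.setOf_and, Set.setOf_and, Set.setOf_and]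
    exact h1.inter (h2.inter (h3.inter h4))
  have hbdd : Bornology.IsBounded T := by
    apply (Metric.isBounded_closedBall
      (x := (0 : EuclideanSpace ℝ (Fin 3))) (r := (r1 + 1) + (|x 2| + 4*Real.pi))).subset
    intro y hy
    rw [hmemT] at hy
    rw [Metric.mem_closedBall, dist_zero_right]
    have h1 := norm_le_rad_add14 y
    have h2 : |y 2| ≤ |x 2| + 4*Real.pi := by
      have h3 := abs_sub_abs_le_abs_sub (y 2) (x 2)
      linarith [hy.2.2.2]
    linarith [hy.2.2.1]
  have hTcomp : IsCompact T := Metric.isCompact_of_isClosed_isBounded hclosed hbdd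
  -- the key estimate, for every ε > 0
  have hkey : ∀ ε : ℝ, 0 < ε → A - ε * (r1+1)^2 ≤ Φ x := by
    intro ε hε
    obtain ⟨uε, huεdef⟩ : ∃ u : EuclideanSpace ℝ (Fin 3) → ℝ,
        u = fun y => Φ y - ε * ((y 0)^2 + (y 1)^2) := ⟨_, rfl⟩
    have hcontu : ContinuousOn uε T := by
      rw [huεdef]
      intro y hy
      rw [hmemT] at hy
      have h1 : ContinuousAt Φ y := ((hnsing y hy.1 hy.2.1).1).continuousAt
      exact (h1.sub ((continuous_const.mul
        (((hcont_coord14 0).pow 2).add ((hcont_coord14 1).pow 2))).continuousAt)).continuousWithinAt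
    obtain ⟨x0, hx0T, hx0min⟩ := hTcomp.exists_isMinOn ⟨x, hxT⟩ hcontu
    -- translate x0 into the central slab
    obtain ⟨mm, hmmdef⟩ : ∃ mm : ℤ, mm = round ((x0 2 - x 2) / (2*Real.pi)) := ⟨_, rfl⟩
    obtain ⟨x1, hx1def⟩ : ∃ x1 : EuclideanSpace ℝ (Fin 3),
        x1 = x0 - ((2*Real.pi*mm : ℝ)) • e3 := ⟨_, rfl⟩
    have hcoord : ∀ i : Fin 3, x1 i = x0 i - (2*Real.pi*mm) * (if i = 2 then 1 else 0) := by
      intro i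
      rw [hx1def, PiLp.sub_apply, PiLp.smul_apply, e3_apply14, smul_eq_mul]
    have hc0 : x1 0 = x0 0 := by
      rw [hcoord 0]
      rw [if_neg (by decide : ¬ ((0:Fin 3) = 2))]
      ring
    have hc1 : x1 1 = x0 1 := by
      rw [hcoord 1]
      rw [if_neg (by decide : ¬ ((1:Fin 3) = 2))]
      ring
    have hc2 : x1 2 = x0 2 - 2*Real.pi*mm := by
      rw [hcoord 2]
      rw [if_pos rfl]
      ring
    have hΦval : Φ x1 = Φ x0 := by rw [hx1def]; exact val_sub_shift14 hper mm x0
    have huval : uε x1 = uε x0 := by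
      simp only [huεdef]
      rw [hΦval, hc0, hc1]
    have hdistq : ∀ (cc : EuclideanSpace ℝ (Fin 3)) (m : ℤ),
        dist x1 (cc + ((2*Real.pi*m : ℝ)) • e3)
          = dist x0 (cc + ((2*Real.pi*((m+mm : ℤ)) : ℝ)) • e3) := by
      intro cc m
      rw [hx1def, dist_sub_shift14, shift_combine14]
    rw [hmemT] at hx0T
    have hslab1 : |x1 2 - x 2| ≤ Real.pi := by
      rw [hc2]
      have h1 : |(x0 2 - x 2)/(2*Real.pi) - (mm:ℝ)| ≤ 1/2 := by
        rw [hmmdef]; exact abs_sub_round _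
      have h2 : x0 2 - 2*Real.pi*(mm:ℝ) - x 2
          = (2*Real.pi) * ((x0 2 - x 2)/(2*Real.pi) - mm) := by
        rw [mul_sub, mul_div_cancel₀ _ (by positivity : (2*Real.pi) ≠ 0)]
        ring
      calc |x0 2 - 2*Real.pi*(mm:ℝ) - x 2|
          = |2*Real.pi| * |(x0 2 - x 2)/(2*Real.pi) - (mm:ℝ)| := by rw [h2, abs_mul]
      _ ≤ (2*Real.pi) * (1/2) := by
          rw [abs_of_pos (by linarith)]
          exact mul_le_mul_of_nonneg_left h1 (by linarith)
      _ ≤ Real.pi := by linarith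
    have hx1T : x1 ∈ T := by
      rw [hmemT]
      refine ⟨?_, ?_, ?_, ?_⟩
      · intro j m; rw [hdistq (q j) m]; exact hx0T.1 j (m+mm)
      · intro i m; rw [hdistq (p i) m]; exact hx0T.2.1 i (m+mm)
      · rw [hc0, hc1]; exact hx0T.2.2.1
      · linarith [hslab1]
    have hx1min : IsMinOn uε T x1 := by
      rw [isMinOn_iff] at hx0min ⊢
      intro y hy
      rw [huval]
      exact hx0min y hy
    rw [hmemT] at hx1T
    -- bound Φ at the minimizer
    have hΦx1 : A ≤ Φ x1 := by
      by_cases hc1' : ∃ (j : Fin k) (m : ℤ), dist x1 (q j + ((2*Real.pi*m : ℝ)) • e3) < 1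
      · obtain ⟨j, m, hd⟩ := hc1'
        linarith [hqann j m x1 (hx1T.1 j m) hd]
      by_cases hc2' : ∃ (i : Fin n) (m : ℤ), dist x1 (p i + ((2*Real.pi*m : ℝ)) • e3) < 2*τ
      · obtain ⟨i, m, hd⟩ := hc2'
        have hpos : 0 < dist x1 (p i + ((2*Real.pi*m : ℝ)) • e3) :=
          lt_of_lt_of_le hτpos (hx1T.2.1 i m)
        linarith [hpball i m x1 hpos hd]
      by_cases hc3' : r1 ≤ Real.sqrt ((x1 0)^2 + (x1 1)^2)
      · exact hfar2 x1 hc3'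
      exfalso
      push_neg at hc1' hc2' hc3'
      have hballT : Metric.ball x1 τ ⊆ T := by
        intro y hy
        rw [Metric.mem_ball] at hy
        rw [hmemT]
        have hdyx : dist y x1 < τ := hy
        refine ⟨?_, ?_, ?_, ?_⟩
        · intro j m
          have h1 := hc1' j m
          have h2 := dist_triangle x1 y (q j + ((2*Real.pi*m : ℝ)) • e3)
          rw [dist_comm x1 y] at h2
          have hδ : 2/lam j ≤ 1/2 := by
            rw [div_le_div_iff₀ (hlampos j) (by norm_num)]
            have h3 := hlam j
            nlinarith
          linarith [hτsmall]
        · intro i m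
          have h1 := hc2' i m
          have h2 := dist_triangle x1 y (p i + ((2*Real.pi*m : ℝ)) • e3)
          rw [dist_comm x1 y] at h2
          linarith
        · have h1 := rad_lip14 y x1
          linarith
        · have h1 : |y 2 - x1 2| ≤ dist y x1 := by
            have h2 := abs_coord_le_norm14 (y - x1) 2
            rw [dist_eq_norm]
            simpa [PiLp.sub_apply] using h2
          have h2 := abs_sub_le (y 2) (x1 2) (x 2)
          have h3 : Real.pi + τ ≤ 4*Real.pi := by linarith [hτsmall]
          linarith [hslab1]
      have hlocmin : IsLocalMin uε x1 :=
        (hx1min.on_subset hballT).isLocalMin (Metric.ball_mem_nhds x1 hτpos)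
      rw [huεdef] at hlocmin
      obtain ⟨hC2', hlap0⟩ := hnsing x1 hx1T.1 hx1T.2.1
      exact lap_pert14 hε hC2' hlap0 hlocmin
    -- chain of inequalities
    have hg1 : (x1 0)^2 + (x1 1)^2 ≤ (r1+1)^2 := by
      have h1 : Real.sqrt ((x1 0)^2 + (x1 1)^2) ≤ r1 + 1 := hx1T.2.2.1
      have h2 : (x1 0)^2 + (x1 1)^2 = (Real.sqrt ((x1 0)^2 + (x1 1)^2))^2 :=
        (Real.sq_sqrt (by positivity)).symm
      have h0 : 0 ≤ Real.sqrt ((x1 0)^2 + (x1 1)^2) := Real.sqrt_nonneg _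
      rw [h2]
      nlinarith
    have hchain1 : A - ε * (r1+1)^2 ≤ uε x1 := by
      simp only [huεdef]
      have h1 : ε * ((x1 0)^2 + (x1 1)^2) ≤ ε * (r1+1)^2 := by nlinarith
      linarith
    have hchain2 : uε x1 ≤ uε x := (isMinOn_iff.1 hx1min) x hxT
    have hchain3 : uε x ≤ Φ x := by
      simp only [huεdef]
      nlinarith [sq_nonneg (x 0), sq_nonneg (x 1)]
    linarith
  -- conclude
  by_contra hlt
  push_neg at hlt
  have hr10 : (0:ℝ) < r1 + 1 := by linarith
  set ε0 : ℝ := (A - Φ x) / (2*(r1+1)^2) with hε0def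
  have hε0pos : 0 < ε0 := by
    rw [hε0def]
    apply div_pos (by linarith) (by positivity)
  have hfin := hkey ε0 hε0pos
  have hεval : ε0 * (r1+1)^2 = (A - Φ x)/2 := by
    rw [hε0def]
    field_simp
  rw [hεval] at hfin
  linarith

end
end

section
/- Let 0 < δ < 1/2 and let N > 2, λ > 1 with Nλ^{-1/2} < 1/2. Let o be a smooth 1-form on ℝ³ supported in {ρ ≥ Nλ^{-1/2}} with |o| ≤ Cρ^{-2} and |do| ≤ C ρ^{-2}|∇χ| where χ is a cutoff with ∇χ supported in Nλ^{-1/2} ≤ ρ ≤ 2Nλ^{-1/2} and |∇χ| ≤ 2N^{-1}λ^{1/2}. Then with the weight w(x) = √(λ^{-2}+ρ²), ‖w^{δ+(1/2)} do‖_{L²} ≤ C' (N^{-2}λ)^{(1-δ)/2} for a constant C' depending only on C and δ. -/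
/- STATEMENT 15: Weighted L² estimate for the obstruction 1-forms in the gluing
construction.  o is a 1-form on ℝ³ supported in {ρ ≥ Nλ^{-1/2}} with |o| ≤ Cρ^{-2}
and |do| ≤ Cρ^{-2}|∇χ|, where the cutoff χ has ∇χ supported in the annulus
Nλ^{-1/2} ≤ ρ ≤ 2Nλ^{-1/2} and |∇χ| ≤ 2N^{-1}λ^{1/2}.  With the weight
w(x) = √(λ^{-2}+ρ²) one gets ‖w^{δ+1/2} do‖_{L²} ≤ C'(N^{-2}λ)^{(1-δ)/2}.
The exterior derivative do is bounded (up to a dimensional constant absorbed in C, C')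
by the full derivative of o, which we use to express the hypotheses and conclusion. -/

open MeasureTheory Metric

noncomputable section

set_option maxHeartbeats 1000000 in
theorem stmt_15 (δ C : ℝ) (hδ1 : 0 < δ) (hδ2 : δ < 1 / 2) (hC : 0 < C) :
    ∃ C' > (0:ℝ), ∀ (N lam : ℝ) (χ : EuclideanSpace ℝ (Fin 3) → ℝ)
      (o : EuclideanSpace ℝ (Fin 3) → EuclideanSpace ℝ (Fin 3) →L[ℝ] ℝ),
      2 < N → 1 < lam → N / Real.sqrt lam < 1 / 2 →
      (∀ x, o x ≠ 0 → N / Real.sqrt lam ≤ ‖x‖) →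
      (∀ x : EuclideanSpace ℝ (Fin 3), x ≠ 0 → ‖o x‖ ≤ C * (‖x‖ ^ 2)⁻¹) →
      (∀ x, fderiv ℝ χ x ≠ 0 → N / Real.sqrt lam ≤ ‖x‖ ∧ ‖x‖ ≤ 2 * N / Real.sqrt lam) →
      (∀ x, ‖fderiv ℝ χ x‖ ≤ 2 * Real.sqrt lam / N) →
      (∀ x : EuclideanSpace ℝ (Fin 3), x ≠ 0 →
        ‖fderiv ℝ o x‖ ≤ C * (‖x‖ ^ 2)⁻¹ * ‖fderiv ℝ χ x‖) →
      Real.sqrt (∫ x : EuclideanSpace ℝ (Fin 3),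
          Real.sqrt (lam⁻¹ ^ 2 + ‖x‖ ^ 2) ^ (2 * δ + 1) * ‖fderiv ℝ o x‖ ^ 2)
        ≤ C' * (N⁻¹ ^ 2 * lam) ^ ((1 - δ) / 2) := by
  classical
  set V : ℝ := (volume (ball (0 : EuclideanSpace ℝ (Fin 3)) 1)).toReal with hVdef
  have hV0 : 0 ≤ V := ENNReal.toReal_nonneg
  refine ⟨16 * C * Real.sqrt V + 1, by positivity, ?_⟩
  intro N lam χ o hN hlam hNlam hsupp ho hχsupp hχbd hdo
  set C' : ℝ := 16 * C * Real.sqrt V + 1 with hC'def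
  have hC'0 : (0:ℝ) < C' := by positivity
  have hlam0 : (0:ℝ) < lam := by linarith
  have hsl : (0:ℝ) < Real.sqrt lam := Real.sqrt_pos.2 hlam0
  have hsl2 : Real.sqrt lam * Real.sqrt lam = lam := Real.mul_self_sqrt hlam0.le
  have hsl1 : (1:ℝ) ≤ Real.sqrt lam := by
    rw [show (1:ℝ) = Real.sqrt 1 from (Real.sqrt_one).symm]
    exact Real.sqrt_le_sqrt hlam.le
  have hN0 : (0:ℝ) < N := by linarith
  set a : ℝ := N / Real.sqrt lam with hadef
  have ha0 : (0:ℝ) < a := div_pos hN0 hsl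
  set b : ℝ := N⁻¹ ^ 2 * lam with hbdef
  have hab : a ^ 2 * b = 1 := by
    rw [hadef, hbdef]
    field_simp
    rw [Real.sq_sqrt hlam0.le]
  have hb : b = (a ^ 2)⁻¹ := by
    field_simp
    nlinarith [hab]
  have hb0 : (0:ℝ) < b := by rw [hb]; positivity
  -- λ⁻¹ ≤ a
  have hlinva : lam⁻¹ ≤ a := by
    rw [hadef]
    rw [div_eq_mul_inv]
    have h1 : Real.sqrt lam ≤ lam := by nlinarith [hsl2, hsl1]
    have h2 : lam⁻¹ ≤ (Real.sqrt lam)⁻¹ := by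
      apply inv_anti₀ hsl h1
    calc lam⁻¹ ≤ (Real.sqrt lam)⁻¹ := h2
      _ = 1 * (Real.sqrt lam)⁻¹ := by ring
      _ ≤ N * (Real.sqrt lam)⁻¹ := by
          apply mul_le_mul_of_nonneg_right (by linarith) (by positivity)
  set M : ℝ := C * (a ^ 2)⁻¹ * (2 * Real.sqrt lam / N) with hMdef
  have hM0 : 0 ≤ M := by positivity
  have hainv : a⁻¹ = Real.sqrt lam / N := by rw [hadef, inv_div]
  have hMval : M = 2 * C * (a ^ 3)⁻¹ := by
    rw [hMdef, show 2 * Real.sqrt lam / N = 2 * a⁻¹ by rw [hainv]; ring]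
    field_simp
  set K : ℝ := (2 * Real.sqrt 2 * a) ^ (2 * δ + 1 : ℝ) * M ^ 2 with hKdef
  have hK0 : 0 ≤ K := by
    apply mul_nonneg _ (sq_nonneg _)
    positivity
  set g : EuclideanSpace ℝ (Fin 3) → ℝ :=
    (closedBall (0 : EuclideanSpace ℝ (Fin 3)) (2 * a)).indicator (fun _ => K) with hgdef
  set f : EuclideanSpace ℝ (Fin 3) → ℝ := fun x =>
    Real.sqrt (lam⁻¹ ^ 2 + ‖x‖ ^ 2) ^ (2 * δ + 1 : ℝ) * ‖fderiv ℝ o x‖ ^ 2 with hfdef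
  have hf0 : ∀ x, 0 ≤ f x := by
    intro x
    apply mul_nonneg _ (sq_nonneg _)
    positivity
  have hg0 : ∀ x, 0 ≤ g x := by
    intro x
    exact Set.indicator_nonneg (fun _ _ => hK0) x
  -- pointwise bound away from 0
  have hpt : ∀ x : EuclideanSpace ℝ (Fin 3), x ≠ 0 → f x ≤ g x := by
    intro x hx
    by_cases hDχ : fderiv ℝ χ x = 0
    · have h1 : ‖fderiv ℝ o x‖ ≤ 0 := by simpa [hDχ] using hdo x hx
      have h2 : ‖fderiv ℝ o x‖ = 0 := le_antisymm h1 (by positivity)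
      simp only [hfdef, h2]
      simpa using hg0 x
    · obtain ⟨hx1, hx2⟩ := hχsupp x hDχ
      have hx2' : ‖x‖ ≤ 2 * a := by rw [hadef, ← mul_div_assoc]; exact hx2
      have hxball : x ∈ closedBall (0 : EuclideanSpace ℝ (Fin 3)) (2 * a) := by
        rw [mem_closedBall_zero_iff]; exact hx2'
      have hgx : g x = K := Set.indicator_of_mem hxball _
      rw [hgx]
      have hxa : a ≤ ‖x‖ := hx1
      have hxpos : (0:ℝ) < ‖x‖ := lt_of_lt_of_le ha0 hxa
      -- weight bound
      have hw : Real.sqrt (lam⁻¹ ^ 2 + ‖x‖ ^ 2) ≤ 2 * Real.sqrt 2 * a := by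
        have h1 : lam⁻¹ ^ 2 ≤ ‖x‖ ^ 2 := by
          apply pow_le_pow_left₀ (by positivity) (le_trans hlinva hxa)
        have h3 : ‖x‖ ^ 2 ≤ (2 * a) ^ 2 := pow_le_pow_left₀ (norm_nonneg x) hx2' 2
        have h2 : lam⁻¹ ^ 2 + ‖x‖ ^ 2 ≤ 2 * (2 * a) ^ 2 := by linarith
        calc Real.sqrt (lam⁻¹ ^ 2 + ‖x‖ ^ 2) ≤ Real.sqrt (2 * (2 * a) ^ 2) :=
              Real.sqrt_le_sqrt h2
          _ = Real.sqrt 2 * (2 * a) := by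
              rw [Real.sqrt_mul (by norm_num), Real.sqrt_sq (by positivity)]
          _ = 2 * Real.sqrt 2 * a := by ring
      have hwpow : Real.sqrt (lam⁻¹ ^ 2 + ‖x‖ ^ 2) ^ (2 * δ + 1 : ℝ)
          ≤ (2 * Real.sqrt 2 * a) ^ (2 * δ + 1 : ℝ) :=
        Real.rpow_le_rpow (Real.sqrt_nonneg _) hw (by linarith)
      -- derivative bound
      have hD : ‖fderiv ℝ o x‖ ≤ M := by
        calc ‖fderiv ℝ o x‖ ≤ C * (‖x‖ ^ 2)⁻¹ * ‖fderiv ℝ χ x‖ := hdo x hx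
          _ ≤ C * (a ^ 2)⁻¹ * (2 * Real.sqrt lam / N) := by
              apply mul_le_mul _ (hχbd x) (norm_nonneg _) (by positivity)
              apply mul_le_mul_of_nonneg_left _ hC.le
              apply inv_anti₀ (by positivity)
              apply pow_le_pow_left₀ ha0.le hxa
          _ = M := hMdef.symm
      calc f x ≤ (2 * Real.sqrt 2 * a) ^ (2 * δ + 1 : ℝ) * M ^ 2 := by
            apply mul_le_mul hwpow (pow_le_pow_left₀ (by positivity) hD 2)
              (sq_nonneg _) (by positivity)
        _ = K := hKdef.symm
  -- a.e. bound
  have hae0 : ∀ᵐ x : EuclideanSpace ℝ (Fin 3), x ≠ 0 := by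
    rw [ae_iff]
    have hset : {x : EuclideanSpace ℝ (Fin 3) | ¬ x ≠ 0} = {(0 : EuclideanSpace ℝ (Fin 3))} := by
      ext y; simp
    rw [hset]
    exact measure_singleton _
  have hae : ∀ᵐ x : EuclideanSpace ℝ (Fin 3), f x ≤ g x := by
    filter_upwards [hae0] with x hx using hpt x hx
  have hgint : Integrable g := by
    apply IntegrableOn.integrable_indicator _ measurableSet_closedBall
    exact integrableOn_const measure_closedBall_lt_top.ne
  have hIle : (∫ x : EuclideanSpace ℝ (Fin 3), f x) ≤ (2 * a) ^ 3 * V * K := by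
    calc (∫ x, f x) ≤ ∫ x, g x :=
          integral_mono_of_nonneg (Filter.Eventually.of_forall hf0) hgint hae
      _ = (volume (closedBall (0:EuclideanSpace ℝ (Fin 3)) (2 * a))).toReal * K := by
          rw [hgdef, integral_indicator_const _ measurableSet_closedBall, smul_eq_mul]
          rfl
      _ = (2 * a) ^ 3 * V * K := by
          rw [Measure.addHaar_closedBall _ _ (by positivity : (0:ℝ) ≤ 2 * a),
            finrank_euclideanSpace_fin, ENNReal.toReal_mul,
            ENNReal.toReal_ofReal (by positivity)]
  -- arithmetic
  have hKval : (2 * a) ^ 3 * V * K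
      = 32 * C ^ 2 * V * (2 * Real.sqrt 2) ^ (2 * δ + 1 : ℝ) * (a ^ (2 * δ - 2 : ℝ)) := by
    rw [hKdef, hMval]
    rw [Real.mul_rpow (by positivity) ha0.le]
    have h3 : (a : ℝ) ^ (3:ℕ) = a ^ (3:ℝ) := by
      rw [← Real.rpow_natCast a 3]; norm_num
    have h6 : ((a : ℝ) ^ (3:ℕ))⁻¹ = a ^ (-3:ℝ) := by
      rw [h3, ← Real.rpow_neg ha0.le]
    have : a ^ (2 * δ + 1 : ℝ) * a ^ (3:ℝ) * (a ^ (-3:ℝ)) ^ 2 = a ^ (2 * δ - 2 : ℝ) := by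
      rw [← Real.rpow_natCast (a ^ (-3:ℝ)) 2, ← Real.rpow_mul ha0.le,
        ← Real.rpow_add ha0, ← Real.rpow_add ha0]
      norm_num
      ring_nf
    calc (2 * a) ^ 3 * V * ((2 * Real.sqrt 2) ^ (2 * δ + 1 : ℝ) * a ^ (2 * δ + 1 : ℝ)
          * (2 * C * (a ^ 3)⁻¹) ^ 2)
        = 32 * C ^ 2 * V * (2 * Real.sqrt 2) ^ (2 * δ + 1 : ℝ)
          * (a ^ (2 * δ + 1 : ℝ) * a ^ (3:ℝ) * (a ^ (-3:ℝ)) ^ 2) := by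
          rw [← h3, ← h6]; ring
      _ = _ := by rw [this]
  have hapow : a ^ (2 * δ - 2 : ℝ) = b ^ (1 - δ : ℝ) := by
    rw [hb]
    have h2 : ((a:ℝ) ^ (2:ℕ))⁻¹ = a ^ (-2:ℝ) := by
      rw [← Real.rpow_natCast a 2, ← Real.rpow_neg ha0.le]; norm_num
    rw [h2, ← Real.rpow_mul ha0.le]
    ring_nf
  have hsqrt2pow : (2 * Real.sqrt 2) ^ (2 * δ + 1 : ℝ) ≤ 8 := by
    have h1 : (1:ℝ) ≤ 2 * Real.sqrt 2 := by
      nlinarith [Real.sq_sqrt (by norm_num : (0:ℝ) ≤ 2), Real.sqrt_nonneg 2,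
        Real.one_le_sqrt.2 (by norm_num : (1:ℝ) ≤ 2)]
    calc (2 * Real.sqrt 2) ^ (2 * δ + 1 : ℝ) ≤ (2 * Real.sqrt 2) ^ (2:ℝ) :=
          Real.rpow_le_rpow_of_exponent_le h1 (by linarith)
      _ = 8 := by
          have h2 : ((2:ℝ) * Real.sqrt 2) ^ (2:ℝ) = ((2:ℝ) * Real.sqrt 2) ^ (2:ℕ) := by
            rw [← Real.rpow_natCast]; norm_num
          rw [h2]
          nlinarith [Real.sq_sqrt (by norm_num : (0:ℝ) ≤ 2)]
  have hbpow0 : (0:ℝ) ≤ b ^ (1 - δ : ℝ) := Real.rpow_nonneg hb0.le _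
  have hfinal : (2 * a) ^ 3 * V * K ≤ C' ^ 2 * b ^ (1 - δ : ℝ) := by
    rw [hKval, hapow]
    have h1 : 32 * C ^ 2 * V * (2 * Real.sqrt 2) ^ (2 * δ + 1 : ℝ) ≤ 256 * C ^ 2 * V := by
      nlinarith [mul_le_mul_of_nonneg_left hsqrt2pow (by positivity : (0:ℝ) ≤ 32 * C ^ 2 * V)]
    have h2 : 256 * C ^ 2 * V ≤ C' ^ 2 := by
      rw [hC'def]
      nlinarith [Real.sq_sqrt hV0, Real.sqrt_nonneg V, mul_pos hC hC]
    nlinarith [mul_le_mul_of_nonneg_right h1 hbpow0,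
      mul_le_mul_of_nonneg_right h2 hbpow0]
  -- finish
  have hIle2 : (∫ x : EuclideanSpace ℝ (Fin 3), f x) ≤ C' ^ 2 * b ^ (1 - δ : ℝ) :=
    le_trans hIle hfinal
  have hrhs : Real.sqrt (C' ^ 2 * b ^ (1 - δ : ℝ)) = C' * b ^ ((1 - δ) / 2 : ℝ) := by
    rw [Real.sqrt_mul (sq_nonneg _), Real.sqrt_sq hC'0.le,
      Real.sqrt_eq_rpow, ← Real.rpow_mul hb0.le,
      show (1 - δ) * (1 / 2) = (1 - δ) / 2 from by ring]
  calc Real.sqrt (∫ x : EuclideanSpace ℝ (Fin 3),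
        Real.sqrt (lam⁻¹ ^ 2 + ‖x‖ ^ 2) ^ (2 * δ + 1) * ‖fderiv ℝ o x‖ ^ 2)
      ≤ Real.sqrt (C' ^ 2 * b ^ (1 - δ : ℝ)) := Real.sqrt_le_sqrt hIle2
    _ = C' * b ^ ((1 - δ) / 2 : ℝ) := hrhs


end
end
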